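/- Let n ≥ 1 and s ∈ (0,1). Fix x ∈ ℝⁿ and let E ⊂ ℝⁿ be a measurable set with finite Lebesgue measure |E|. Then ∫_{ℝⁿ∖E} |x−y|^{−(n+2s)} dy ≥ c(n,s) |E|^{−2s/n} for a suitable constant c(n,s) > 0 depending only on n and s. -/

import Mathlib

open MeasureTheory Set
open scoped ENNReal

/-- For any `x` and any measurable set `E` of finite measure,
`∫_{Eᶜ} |x-y|^{-(n+2s)} dy ≥ c(n,s) |E|^{-2s/n}`. -/
theorem integral_complement_ge (n : ℕ) (hn : 1 ≤ n) (s : ℝ) (hs : s ∈ Ioo (0:ℝ) 1) :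
    ∃ c > (0:ℝ), ∀ (x : EuclideanSpace ℝ (Fin n)) (E : Set (EuclideanSpace ℝ (Fin n))),
      MeasurableSet E → volume E < ⊤ →
      ENNReal.ofReal c * (volume E) ^ (-(2 * s / (n : ℝ))) ≤
        ∫⁻ y in Eᶜ, ENNReal.ofReal (‖x - y‖ ^ (-((n : ℝ) + 2 * s))) := by
  obtain ⟨hs0, hs1⟩ := hs
  have hn0 : (0:ℝ) < (n:ℝ) := by exact_mod_cast hn
  haveI : Nonempty (Fin n) := ⟨⟨0, hn⟩⟩
  haveI : Nontrivial (EuclideanSpace ℝ (Fin n)) := inferInstance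
  set p : ℝ := -((n : ℝ) + 2 * s) with hp
  have hpneg : p < 0 := by simp only [hp]; nlinarith
  set ω : ℝ≥0∞ := volume (Metric.ball (0 : EuclideanSpace ℝ (Fin n)) 1) with hωdef
  have hω0 : 0 < ω := Metric.measure_ball_pos _ _ one_pos
  have hωt : ω < ⊤ := measure_ball_lt_top
  set w : ℝ := ω.toReal with hwdef
  have hw0 : 0 < w := ENNReal.toReal_pos hω0.ne' hωt.ne
  have hωw : ω = ENNReal.ofReal w := (ENNReal.ofReal_toReal hωt.ne).symm
  have hfr : Module.finrank ℝ (EuclideanSpace ℝ (Fin n)) = n := finrank_euclideanSpace_fin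
  -- volume of ball of radius ρ
  have hball : ∀ (x : EuclideanSpace ℝ (Fin n)) (ρ : ℝ), 0 < ρ →
      volume (Metric.ball x ρ) = ENNReal.ofReal (ρ ^ (n:ℝ)) * ω := by
    intro x ρ hρ
    rw [Measure.addHaar_ball_of_pos volume x hρ, hfr, ← Real.rpow_natCast ρ n]
  -- key lower bound on integrals over subsets of punctured balls
  have key : ∀ (x : EuclideanSpace ℝ (Fin n)) (ρ : ℝ), 0 < ρ →
      ∀ A : Set (EuclideanSpace ℝ (Fin n)), MeasurableSet A →
      A ⊆ Metric.ball x ρ \ {x} →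
      ENNReal.ofReal (ρ ^ p) * volume A ≤
        ∫⁻ y in A, ENNReal.ofReal (‖x - y‖ ^ p) := by
    intro x ρ hρ A hA hAsub
    calc ENNReal.ofReal (ρ ^ p) * volume A
        = ∫⁻ _ in A, ENNReal.ofReal (ρ ^ p) := (setLIntegral_const A _).symm
      _ ≤ ∫⁻ y in A, ENNReal.ofReal (‖x - y‖ ^ p) := by
          refine setLIntegral_mono' hA fun y hy => ?_
          obtain ⟨hy1, hy2⟩ := hAsub hy
          have hne : y ≠ x := hy2
          have h1 : 0 < ‖x - y‖ := by
            rw [norm_pos_iff, sub_ne_zero]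
            exact fun h => hne h.symm
          have h2 : ‖x - y‖ ≤ ρ := by
            rw [← dist_eq_norm, dist_comm]
            exact (Metric.mem_ball.mp hy1).le
          exact ENNReal.ofReal_le_ofReal
            (Real.rpow_le_rpow_of_nonpos h1 h2 hpneg.le)
  refine ⟨(2/w) ^ (p/(n:ℝ)), Real.rpow_pos_of_pos (by positivity) _, ?_⟩
  set c : ℝ := (2/w) ^ (p/(n:ℝ)) with hcdef
  have hc0 : 0 < c := Real.rpow_pos_of_pos (by positivity) _
  intro x E hE hEfin
  by_cases hm : volume E = 0
  · -- measure zero case: the integral is infinite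
    have hEc : (∫⁻ y in Eᶜ, ENNReal.ofReal (‖x - y‖ ^ p)) =
        ∫⁻ y, ENNReal.ofReal (‖x - y‖ ^ p) := by
      rw [← lintegral_add_compl (μ := volume) _ hE, setLIntegral_measure_zero _ _ hm, zero_add]
    have htop : (∫⁻ y, ENNReal.ofReal (‖x - y‖ ^ p)) = ⊤ := by
      apply ENNReal.eq_top_of_forall_nnreal_le
      intro k
      set ρ : ℝ := (((k:ℝ)+1)/w) ^ (-(1/(2*s))) with hρdef
      have hk1 : (0:ℝ) < ((k:ℝ)+1)/w := by positivity
      have hρ0 : 0 < ρ := Real.rpow_pos_of_pos hk1 _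
      have hB : MeasurableSet (Metric.ball x ρ \ {x}) :=
        measurableSet_ball.diff (measurableSet_singleton x)
      have hvol : volume (Metric.ball x ρ \ {x}) = ENNReal.ofReal (ρ ^ (n:ℝ)) * ω := by
        rw [measure_diff_null (measure_singleton x), hball x ρ hρ0]
      have hkey := key x ρ hρ0 _ hB subset_rfl
      rw [hvol] at hkey
      have hle : ENNReal.ofReal (ρ ^ p) * (ENNReal.ofReal (ρ ^ (n:ℝ)) * ω) ≤
          ∫⁻ y, ENNReal.ofReal (‖x - y‖ ^ p) :=
        hkey.trans (setLIntegral_le_lintegral _ _)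
      refine le_trans ?_ hle
      rw [hωw, ← ENNReal.ofReal_mul (by positivity), ← ENNReal.ofReal_mul (by positivity)]
      have hval : ρ ^ p * (ρ ^ (n:ℝ) * w) = ((k:ℝ)+1) := by
        rw [← mul_assoc, ← Real.rpow_add hρ0]
        have hpn : p + (n:ℝ) = -(2*s) := by rw [hp]; ring
        rw [hpn, hρdef, ← Real.rpow_mul hk1.le]
        have : -(1/(2*s)) * -(2*s) = 1 := by field_simp
        rw [this, Real.rpow_one]
        field_simp
      rw [hval, ← ENNReal.ofReal_coe_nnreal]
      exact ENNReal.ofReal_le_ofReal (by linarith)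
    rw [hEc, htop, hm, ENNReal.zero_rpow_of_neg (neg_lt_zero.mpr (by positivity))]
    exact le_top
  · -- positive measure case
    set m' : ℝ := (volume E).toReal with hm'def
    have hm'0 : 0 < m' := ENNReal.toReal_pos hm hEfin.ne
    set r : ℝ := (2*m'/w) ^ ((n:ℝ)⁻¹) with hrdef
    have hbase : (0:ℝ) < 2*m'/w := by positivity
    have hr0 : 0 < r := Real.rpow_pos_of_pos hbase _
    have hrn : r ^ ((n:ℝ)) = 2*m'/w := by
      rw [hrdef, ← Real.rpow_mul hbase.le, inv_mul_cancel₀ hn0.ne', Real.rpow_one]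
    have hvolball : volume (Metric.ball x r) = 2 * volume E := by
      rw [hball x r hr0, hrn, hωw, ← ENNReal.ofReal_mul (by positivity)]
      have : 2*m'/w*w = 2*m' := by field_simp
      rw [this, ENNReal.ofReal_mul (by norm_num), hm'def, ENNReal.ofReal_toReal hEfin.ne,
        ENNReal.ofReal_ofNat]
    set B' : Set (EuclideanSpace ℝ (Fin n)) := Metric.ball x r \ {x} with hB'def
    have hB'meas : MeasurableSet B' := measurableSet_ball.diff (measurableSet_singleton x)
    have hB'vol : volume B' = 2 * volume E := by
      rw [hB'def, measure_diff_null (measure_singleton x), hvolball]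
    set A : Set (EuclideanSpace ℝ (Fin n)) := Eᶜ ∩ B' with hAdef
    have hAmeas : MeasurableSet A := hE.compl.inter hB'meas
    have hAm : volume E ≤ volume A := by
      have hsplit : volume B' ≤ volume (E ∩ B') + volume A := by
        calc volume B' = volume ((E ∩ B') ∪ (Eᶜ ∩ B')) := by
              rw [← union_inter_distrib_right, union_compl_self, univ_inter]
          _ ≤ volume (E ∩ B') + volume (Eᶜ ∩ B') := measure_union_le _ _
      have h2 : volume E + volume E ≤ volume E + volume A := by
        calc volume E + volume E = volume B' := by rw [hB'vol, two_mul]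
          _ ≤ volume (E ∩ B') + volume A := hsplit
          _ ≤ volume E + volume A :=
              add_le_add_left (measure_mono inter_subset_left) _
      exact (ENNReal.add_le_add_iff_left hEfin.ne).mp h2
    -- the real-number identity
    have h1 : r ^ p = c * m' ^ (p/(n:ℝ)) := by
      rw [hrdef, ← Real.rpow_mul hbase.le]
      have he : (n:ℝ)⁻¹ * p = p / (n:ℝ) := by ring
      rw [he, show 2*m'/w = (2/w)*m' from by ring,
        Real.mul_rpow (by positivity) hm'0.le, hcdef]
    have hexp : p/(n:ℝ) + 1 = -(2*s/(n:ℝ)) := by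
      rw [hp]; field_simp; ring
    have hreal : c * m' ^ (-(2*s/(n:ℝ))) = r ^ p * m' := by
      rw [h1, mul_assoc, ← Real.rpow_add_one hm'0.ne', hexp]
    calc ENNReal.ofReal c * (volume E) ^ (-(2 * s / (n : ℝ)))
        = ENNReal.ofReal (c * m' ^ (-(2*s/(n:ℝ)))) := by
          rw [ENNReal.ofReal_mul hc0.le, ← ENNReal.ofReal_rpow_of_pos hm'0, hm'def,
            ENNReal.ofReal_toReal hEfin.ne]
      _ = ENNReal.ofReal (r ^ p) * volume E := by
          rw [hreal, ENNReal.ofReal_mul (by positivity), hm'def,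
            ENNReal.ofReal_toReal hEfin.ne]
      _ ≤ ENNReal.ofReal (r ^ p) * volume A := mul_le_mul_right hAm _
      _ ≤ ∫⁻ y in A, ENNReal.ofReal (‖x - y‖ ^ p) :=
          key x r hr0 A hAmeas inter_subset_right
      _ ≤ ∫⁻ y in Eᶜ, ENNReal.ofReal (‖x - y‖ ^ p) :=
          lintegral_mono_set inter_subset_left
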